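/- Fix s < t, ℓ < υ, and x, y ∈ [ℓ, υ]. With ς_j := σ̄ⱼ^{ℓ,υ}(x,y) + σ̄ⱼ^{−υ,−ℓ}(−x,−y) and φ_j := φ̄ⱼ^{ℓ,υ}(x,y) + φ̄ⱼ^{−υ,−ℓ}(−x,−y) as in the γ series, for every j ≥ 1 one has ς_j ≥ φ_j ≥ ς_{j+1}, so that the partial sums S_{2k} = 1 − Σ_{j=1}^{k}(ς_j − φ_j) and S_{2k+1} = S_{2k} − ς_{k+1} form an alternating sequence with S_{2k+1} ≤ γ ≤ S_{2k} converging to γ = 1 − Σ_{j≥1}(ς_j − φ_j). -/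

import Mathlib

open Filter

/-- Alternating Cauchy sequence property of the `γ` series: with
`ςⱼ := σ̄ⱼ^{ℓ,υ}(x,y) + σ̄ⱼ^{−υ,−ℓ}(−x,−y)` and `φⱼ := φ̄ⱼ^{ℓ,υ}(x,y) + φ̄ⱼ^{−υ,−ℓ}(−x,−y)`,
for every `j ≥ 1` one has `ςⱼ ≥ φⱼ ≥ ς_{j+1}`, so the partial sums
`S_{2k} = 1 − Σ_{j=1}^k (ςⱼ − φⱼ)` and `S_{2k+1} = S_{2k} − ς_{k+1}` bracket
`γ = 1 − Σ_{j≥1}(ςⱼ − φⱼ)` and both converge to it. -/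
theorem stmt4 (s t ℓ υ x y : ℝ) (hst : s < t) (hlu : ℓ < υ)
    (hx : x ∈ Set.Icc ℓ υ) (hy : y ∈ Set.Icc ℓ υ)
    (sbar pbar : ℝ → ℝ → ℝ → ℝ → ℕ → ℝ)
    (hsbar : ∀ l u a b (j : ℕ), sbar l u a b j =
      Real.exp (-2 * (|u - l| * j + min l u - a) * (|u - l| * j + min l u - b) / (t - s)))
    (hpbar : ∀ l u a b (j : ℕ), pbar l u a b j =
      Real.exp (-2 * j * (|u - l| ^ 2 * j + |u - l| * (a - b)) / (t - s)))
    (ς φ : ℕ → ℝ)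
    (hς : ∀ j, ς j = sbar ℓ υ x y j + sbar (-υ) (-ℓ) (-x) (-y) j)
    (hφ : ∀ j, φ j = pbar ℓ υ x y j + pbar (-υ) (-ℓ) (-x) (-y) j)
    (γ : ℝ) (hγ : HasSum (fun j : ℕ => ς (j + 1) - φ (j + 1)) (1 - γ)) :
    (∀ j : ℕ, 1 ≤ j → φ j ≤ ς j ∧ ς (j + 1) ≤ φ j) ∧
    (∀ k : ℕ,
      (1 - ∑ j ∈ Finset.range k, (ς (j + 1) - φ (j + 1))) - ς (k + 1) ≤ γ ∧
      γ ≤ 1 - ∑ j ∈ Finset.range k, (ς (j + 1) - φ (j + 1))) ∧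
    Tendsto (fun k => 1 - ∑ j ∈ Finset.range k, (ς (j + 1) - φ (j + 1)))
      atTop (nhds γ) ∧
    Tendsto (fun k => (1 - ∑ j ∈ Finset.range k, (ς (j + 1) - φ (j + 1))) - ς (k + 1))
      atTop (nhds γ) := by
  obtain ⟨hx1, hx2⟩ := hx
  obtain ⟨hy1, hy2⟩ := hy
  have hT0 : (0:ℝ) < t - s := sub_pos.2 hst
  have hd0 : (0:ℝ) < υ - ℓ := sub_pos.2 hlu
  have habs : |υ - ℓ| = υ - ℓ := abs_of_pos hd0
  have habs2 : |(-ℓ) - (-υ)| = υ - ℓ := by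
    rw [show (-ℓ) - (-υ) = υ - ℓ by ring]; exact habs
  have hmin1 : min ℓ υ = ℓ := min_eq_left hlu.le
  have hmin2 : min (-υ) (-ℓ) = -υ := min_eq_left (by linarith)
  have key : ∀ A B C D : ℝ, C * D ≤ A * B →
      Real.exp (-2 * A * B / (t - s)) ≤ Real.exp (-2 * C * D / (t - s)) := by
    intro A B C D h
    apply Real.exp_le_exp.2
    apply (div_le_div_iff_of_pos_right hT0).2
    nlinarith [h]
  -- part 1
  have step : ∀ j : ℕ, 1 ≤ j → φ j ≤ ς j ∧ ς (j + 1) ≤ φ j := by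
    intro j hj
    have hj1 : (1:ℝ) ≤ (j:ℝ) := by exact_mod_cast hj
    have hj0 : (0:ℝ) ≤ (j:ℝ) := by linarith
    have hax : 0 ≤ x - ℓ := by linarith
    have hay : 0 ≤ y - ℓ := by linarith
    have hbx : 0 ≤ υ - x := by linarith
    have hby : 0 ≤ υ - y := by linarith
    rw [hς, hς, hφ, hsbar, hsbar, hsbar, hsbar, hpbar, hpbar, habs, habs2, hmin1, hmin2]
    push_cast
    constructor
    · refine add_le_add (key _ _ _ _ ?_) (key _ _ _ _ ?_)
      · have h1 := mul_le_mul_of_nonneg_left (sub_le_sub_right hy2 ℓ) hax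
        have h2 := mul_le_mul_of_nonneg_left (le_mul_of_one_le_right hd0.le hj1) hax
        have h3 := mul_nonneg hax (mul_nonneg hd0.le hj0)
        nlinarith [h1, h2, h3]
      · have h1 := mul_le_mul_of_nonneg_left (sub_le_sub_left hy1 υ) hbx
        have h2 := mul_le_mul_of_nonneg_left (le_mul_of_one_le_right hd0.le hj1) hbx
        have h3 := mul_nonneg hbx (mul_nonneg hd0.le hj0)
        nlinarith [h1, h2, h3]
    · refine add_le_add (key _ _ _ _ ?_) (key _ _ _ _ ?_)
      · have h1 := mul_nonneg (mul_nonneg hd0.le hj0) hbx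
        have h2 := mul_nonneg hbx hby
        nlinarith [h1, h2]
      · have h1 := mul_nonneg (mul_nonneg hd0.le hj0) hax
        have h2 := mul_nonneg hax hay
        nlinarith [h1, h2]
  have hςpos : ∀ j, 0 ≤ ς j := by
    intro j
    rw [hς, hsbar, hsbar]
    positivity
  have hf0 : ∀ j : ℕ, 0 ≤ ς (j + 1) - φ (j + 1) := fun j =>
    sub_nonneg.2 (step (j + 1) (Nat.le_add_left 1 j)).1
  -- bracketing
  have hbr : ∀ k : ℕ,
      (1 - ∑ j ∈ Finset.range k, (ς (j + 1) - φ (j + 1))) - ς (k + 1) ≤ γ ∧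
      γ ≤ 1 - ∑ j ∈ Finset.range k, (ς (j + 1) - φ (j + 1)) := by
    intro k
    constructor
    · -- tail bound
      have htail : HasSum (fun n : ℕ => ς (n + k + 1) - φ (n + k + 1))
          ((1 - γ) - ∑ j ∈ Finset.range k, (ς (j + 1) - φ (j + 1))) := by
        have := (hasSum_nat_add_iff' (f := fun j : ℕ => ς (j + 1) - φ (j + 1)) k).2 hγ
        simpa using this
      have hts : ((1 - γ) - ∑ j ∈ Finset.range k, (ς (j + 1) - φ (j + 1)))
          = ∑' n : ℕ, (ς (n + k + 1) - φ (n + k + 1)) := htail.tsum_eq.symm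
      have hbound : ∑' n : ℕ, (ς (n + k + 1) - φ (n + k + 1)) ≤ ς (k + 1) := by
        apply Real.tsum_le_of_sum_range_le (fun n => hf0 (n + k))
        intro n
        have hle : ∑ i ∈ Finset.range n, (ς (i + k + 1) - φ (i + k + 1)) ≤
            ∑ i ∈ Finset.range n, (ς (k + 1 + i) - ς (k + 1 + (i + 1))) := by
          apply Finset.sum_le_sum
          intro i _
          have h1 := (step (i + k + 1) (Nat.le_add_left 1 (i + k))).2
          have e1 : k + 1 + i = i + k + 1 := by omega
          have e2 : k + 1 + (i + 1) = i + k + 1 + 1 := by omega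
          rw [e1, e2]
          linarith
        have htel : ∑ i ∈ Finset.range n, (ς (k + 1 + i) - ς (k + 1 + (i + 1)))
            = ς (k + 1 + 0) - ς (k + 1 + n) :=
          Finset.sum_range_sub' (fun i => ς (k + 1 + i)) n
        rw [htel] at hle
        have := hςpos (k + 1 + n)
        simpa using hle.trans (by linarith)
      have hb2 : (1 - γ) - ∑ j ∈ Finset.range k, (ς (j + 1) - φ (j + 1)) ≤ ς (k + 1) := by
        rw [hts]; exact hbound
      linarith
    · have := sum_le_hasSum (Finset.range k) (fun i _ => hf0 i) hγ
      linarith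
  have hS : Tendsto (fun k => ∑ j ∈ Finset.range k, (ς (j + 1) - φ (j + 1)))
      atTop (nhds (1 - γ)) := hγ.tendsto_sum_nat
  have h3 : Tendsto (fun k => 1 - ∑ j ∈ Finset.range k, (ς (j + 1) - φ (j + 1)))
      atTop (nhds γ) := by
    have := (tendsto_const_nhds :
      Tendsto (fun _ : ℕ => (1:ℝ)) atTop (nhds 1)).sub hS
    simpa using this
  -- ς tends to 0
  have hexp0 : ∀ c1 c2 : ℝ, Tendsto (fun j : ℕ =>
      Real.exp (-2 * ((υ - ℓ) * j + c1) * ((υ - ℓ) * j + c2) / (t - s))) atTop (nhds 0) := by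
    intro c1 c2
    have hP : ∀ c : ℝ, Tendsto (fun j : ℕ => (υ - ℓ) * (j : ℝ) + c) atTop atTop := fun c =>
      tendsto_atTop_add_const_right _ c ((tendsto_natCast_atTop_atTop).const_mul_atTop hd0)
    have hprod : Tendsto (fun j : ℕ => ((υ - ℓ) * (j : ℝ) + c1) * ((υ - ℓ) * (j : ℝ) + c2))
        atTop atTop := (hP c1).atTop_mul_atTop₀ (hP c2)
    have hneg : Tendsto (fun j : ℕ =>
        (((υ - ℓ) * (j : ℝ) + c1) * ((υ - ℓ) * (j : ℝ) + c2)) * (-2 / (t - s)))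
        atTop atBot := hprod.atTop_mul_const_of_neg (div_neg_of_neg_of_pos (by norm_num) hT0)
    have : Tendsto (fun j : ℕ =>
        Real.exp ((((υ - ℓ) * (j : ℝ) + c1) * ((υ - ℓ) * (j : ℝ) + c2)) * (-2 / (t - s))))
        atTop (nhds 0) := Real.tendsto_exp_atBot.comp hneg
    refine this.congr fun j => ?_
    congr 1
    ring
  have hςlim : Tendsto ς atTop (nhds 0) := by
    have hform : ς = fun j : ℕ =>
        Real.exp (-2 * ((υ - ℓ) * j + (ℓ - x)) * ((υ - ℓ) * j + (ℓ - y)) / (t - s)) +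
        Real.exp (-2 * ((υ - ℓ) * j + (x - υ)) * ((υ - ℓ) * j + (y - υ)) / (t - s)) := by
      funext j
      rw [hς, hsbar, hsbar, habs, habs2, hmin1, hmin2]
      congr 1 <;> · congr 1; ring
    rw [hform]
    simpa using (hexp0 (ℓ - x) (ℓ - y)).add (hexp0 (x - υ) (y - υ))
  have hς1 : Tendsto (fun k : ℕ => ς (k + 1)) atTop (nhds 0) :=
    hςlim.comp (tendsto_add_atTop_nat 1)
  refine ⟨step, hbr, h3, ?_⟩
  simpa using h3.sub hς1
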